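/- Let p be an odd prime, let χ be any multiplicative character of F_p^× with values in ℂ^×, and let η be the quadratic character of F_p^×. Then G(χ) ≠ G(χη) and G(χ) ≠ −G(χη). -/

import Mathlib

open Complex Polynomial IntermediateField
set_option synthInstance.maxHeartbeats 1000000
set_option maxHeartbeats 1000000

lemma finrank_adjoin_primroot {x : ℂ} {n : ℕ} (hn : 0 < n) (hx : IsPrimitiveRoot x n) :
    Module.finrank ℚ ℚ⟮x⟯ = n.totient := by
  haveI : NeZero ((n : ℕ) : ℚ) := ⟨by exact_mod_cast hn.ne'⟩
  have hint : IsIntegral ℚ x := (hx.isIntegral hn).tower_top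
  rw [IntermediateField.adjoin.finrank hint,
    ← hx.minpoly_eq_cyclotomic_of_irreducible (Polynomial.cyclotomic.irreducible_rat hn),
    natDegree_cyclotomic]

lemma key_li (p : ℕ) [hp : Fact p.Prime] (hp2 : p ≠ 2) :
    LinearIndependent (ℚ⟮Complex.exp (2 * Real.pi * I / (p - 1 : ℕ))⟯)
      (fun i : Fin (p - 1) => Complex.exp (2 * Real.pi * I / p) ^ (i : ℕ)) := by
  have hp3 : 3 ≤ p := (hp.out.two_le).lt_of_ne (Ne.symm hp2)
  have hp0 : (p : ℕ) ≠ 0 := hp.out.pos.ne'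
  have hp10 : (p - 1 : ℕ) ≠ 0 := by omega
  have hN0 : (p * (p - 1) : ℕ) ≠ 0 := by positivity
  set ω := Complex.exp (2 * Real.pi * I / (p - 1 : ℕ)) with hωdef
  set ζ := Complex.exp (2 * Real.pi * I / p) with hζdef
  set ξ := Complex.exp (2 * Real.pi * I / (p * (p - 1) : ℕ)) with hξdef
  have hω : IsPrimitiveRoot ω (p - 1) := Complex.isPrimitiveRoot_exp _ hp10
  have hζ : IsPrimitiveRoot ζ p := by
    have := Complex.isPrimitiveRoot_exp p hp0
    convert this using 3
  have hξ : IsPrimitiveRoot ξ (p * (p - 1)) := Complex.isPrimitiveRoot_exp _ hN0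
  -- identities
  have hcp : ((p : ℂ)) ≠ 0 := Nat.cast_ne_zero.mpr hp0
  have hc1 : ((p - 1 : ℕ) : ℂ) = (p : ℂ) - 1 := by
    rw [Nat.cast_sub hp.out.one_le]; simp
  have hcmul : ((p * (p - 1) : ℕ) : ℂ) = (p : ℂ) * ((p : ℂ) - 1) := by
    rw [Nat.cast_mul, hc1]
  have hcp1 : ((p : ℂ) - 1) ≠ 0 := by
    have : ((p - 1 : ℕ) : ℂ) ≠ 0 := Nat.cast_ne_zero.mpr hp10
    rwa [hc1] at this
  have hωpow : ξ ^ p = ω := by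
    rw [hξdef, hωdef, ← Complex.exp_nat_mul]
    congr 1
    rw [hcmul, hc1]
    field_simp
  have hζpow : ξ ^ (p - 1) = ζ := by
    rw [hξdef, hζdef, ← Complex.exp_nat_mul]
    congr 1
    rw [hcmul, hc1]
    field_simp
  have hξeq : ξ = ω * ζ⁻¹ := by
    rw [hξdef, hωdef, hζdef, ← Complex.exp_neg, ← Complex.exp_add]
    congr 1
    rw [hcmul, hc1]
    field_simp
    ring
  set K : IntermediateField ℚ ℂ := ℚ⟮ω⟯ with hK
  have hζint : IsIntegral (↥K) ζ := ((hζ.isIntegral hp.out.pos).tower_top (A := ℚ)).tower_top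
  -- the compositum
  have hadj : (IntermediateField.adjoin (↥K) {ζ}).restrictScalars ℚ = ℚ⟮ξ⟯ := by
    refine (IntermediateField.adjoin_adjoin_left (F := ℚ) (S := {ω}) {ζ}).trans ?_
    apply le_antisymm
    · rw [IntermediateField.adjoin_le_iff]
      rintro x (rfl | rfl)
      · exact hωpow ▸ pow_mem (IntermediateField.mem_adjoin_simple_self ℚ ξ) p
      · exact hζpow ▸ pow_mem (IntermediateField.mem_adjoin_simple_self ℚ ξ) (p - 1)
    · rw [IntermediateField.adjoin_le_iff]
      rintro x rfl
      rw [hξeq]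
      exact mul_mem (IntermediateField.subset_adjoin ℚ _ (Set.mem_insert _ _))
        (inv_mem (IntermediateField.subset_adjoin ℚ _ (Set.mem_insert_of_mem _ rfl)))
  have hfinK : Module.finrank ℚ K = (p - 1).totient := finrank_adjoin_primroot (by omega) hω
  have hfinL : Module.finrank ℚ (ℚ⟮ξ⟯ : IntermediateField ℚ ℂ) = (p * (p - 1)).totient :=
    finrank_adjoin_primroot (by positivity) hξ
  have hcop : Nat.Coprime p (p - 1) := by
    have h2 : p - 1 + 1 = p := Nat.succ_pred_eq_of_pos hp.out.pos
    rw [← h2]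
    simp
  have htot : (p * (p - 1)).totient = (p - 1) * (p - 1).totient := by
    rw [Nat.totient_mul hcop, Nat.totient_prime hp.out]
  haveI : FiniteDimensional (↥K) (IntermediateField.adjoin (↥K) {ζ}) :=
    IntermediateField.adjoin.finiteDimensional hζint
  have htower : Module.finrank ℚ K * Module.finrank (↥K) (IntermediateField.adjoin (↥K) {ζ})
      = (p - 1) * (p - 1).totient := by
    rw [Module.finrank_mul_finrank]
    rw [← htot, ← hfinL, ← hadj]
    rfl
  have hdeg : (minpoly (↥K) ζ).natDegree = p - 1 := by
    have h1 : Module.finrank (↥K) (IntermediateField.adjoin (↥K) {ζ}) = p - 1 := by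
      have ht0 : (p - 1).totient ≠ 0 := Nat.totient_pos.mpr (by omega) |>.ne'
      rw [hfinK] at htower
      have := htower
      rw [mul_comm ((p-1).totient) _] at this
      exact Nat.eq_of_mul_eq_mul_right (Nat.pos_of_ne_zero ht0) (by linarith [this])
    rw [← IntermediateField.adjoin.finrank hζint, h1]
  have hli := linearIndependent_pow (K := ↥K) (S := ℂ) ζ
  rw [hdeg] at hli
  exact hli

lemma key_zero (p : ℕ) [hp : Fact p.Prime] (hp2 : p ≠ 2) (c : (ZMod p)ˣ → ℂ)
    (hc : ∀ a, c a ∈ (ℚ⟮Complex.exp (2 * Real.pi * I / (p - 1 : ℕ))⟯ : IntermediateField ℚ ℂ))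
    (hsum : ∑ a : (ZMod p)ˣ, c a * Complex.exp (2 * Real.pi * I / p) ^ ((a : ZMod p).val) = 0) :
    ∀ a, c a = 0 := by
  have hp3 : 3 ≤ p := (hp.out.two_le).lt_of_ne (Ne.symm hp2)
  haveI : NeZero p := ⟨hp.out.pos.ne'⟩
  set K : IntermediateField ℚ ℂ := ℚ⟮Complex.exp (2 * Real.pi * I / (p - 1 : ℕ))⟯ with hK
  set ζ := Complex.exp (2 * Real.pi * I / p) with hζdef
  have hζ0 : ζ ≠ 0 := Complex.exp_ne_zero _
  have li1 : LinearIndependent (↥K) (fun i : Fin (p - 1) => ζ ^ ((i : ℕ) + 1)) := by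
    have li0 := key_li p hp2
    have hmap : LinearIndependent (↥K) (⇑(LinearMap.mulLeft (↥K) ζ) ∘ fun i : Fin (p - 1) => ζ ^ (i : ℕ)) := li0.map' (LinearMap.mulLeft (↥K) ζ)
      (LinearMap.ker_eq_bot.mpr (mul_right_injective₀ hζ0))
    convert hmap using 1
    funext i
    simp only [Function.comp_apply, LinearMap.mulLeft_apply, ← hζdef]
    rw [pow_succ, mul_comm]
  -- facts about val
  have hval0 : ∀ a : (ZMod p)ˣ, (a : ZMod p).val ≠ 0 := by
    intro a h
    have : (a : ZMod p) = 0 := by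
      rwa [ZMod.val_eq_zero] at h
    exact a.ne_zero this
  have hvallt : ∀ a : (ZMod p)ˣ, (a : ZMod p).val < p := fun a => ZMod.val_lt _
  set e : (ZMod p)ˣ → Fin (p - 1) := fun a => ⟨(a : ZMod p).val - 1, by
    have := hvallt a; have := hval0 a; omega⟩ with he
  have einj : Function.Injective e := by
    intro a b hab
    have h1 : (a : ZMod p).val - 1 = (b : ZMod p).val - 1 := congrArg Fin.val hab
    have h2 : (a : ZMod p).val = (b : ZMod p).val := by
      have := hval0 a; have := hval0 b; omega
    exact Units.ext (ZMod.val_injective p h2)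
  have li2 : LinearIndependent (↥K) (fun a : (ZMod p)ˣ => ζ ^ ((a : ZMod p).val)) := by
    have := li1.comp e einj
    convert this using 1
    funext a
    simp only [Function.comp_apply, he]
    congr 1
    have := hval0 a
    omega
  set g : (ZMod p)ˣ → ↥K := fun a => ⟨c a, hc a⟩ with hg
  have hsum' : ∑ a : (ZMod p)ˣ, g a • (ζ ^ ((a : ZMod p).val)) = 0 := by
    rw [← hsum]
    apply Finset.sum_congr rfl
    intro a _
    rw [Algebra.smul_def]
    rfl
  intro a
  have := Fintype.linearIndependent_iff.mp li2 g hsum' a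
  have : (g a : ℂ) = 0 := by rw [this]; rfl
  simpa [hg] using this

/-- The Gauss sum of a multiplicative character `φ : F_p^× → ℂ^×` of a prime field:
`G(φ) = Σ_{a ∈ F_p^×} exp(2πi·a/p)·φ(a)`. -/
noncomputable def gaussSumP (p : ℕ) [Fact p.Prime] (φ : (ZMod p)ˣ →* ℂˣ) : ℂ :=
  ∑ a : (ZMod p)ˣ,
    Complex.exp (2 * Real.pi * Complex.I * (((a : ZMod p).val : ℕ) : ℂ) / p) * (φ a : ℂ)

/-- For an odd prime `p`, any multiplicative character `χ` of `F_p^×` and the quadratic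
character `η` of `F_p^×`, the Gauss sums satisfy `G(χ) ≠ G(χη)` and `G(χ) ≠ -G(χη)`. -/
theorem gauss_sum_ne_gauss_sum_mul_quadratic (p : ℕ) [Fact p.Prime] (hp : p ≠ 2)
    (χ η : (ZMod p)ˣ →* ℂˣ)
    (hη : ∀ a : (ZMod p)ˣ, (η a : ℂ) = if ∃ b : (ZMod p)ˣ, b ^ 2 = a then 1 else -1) :
    gaussSumP p χ ≠ gaussSumP p (χ * η) ∧ gaussSumP p χ ≠ -gaussSumP p (χ * η) := by
  have hpf : Fact p.Prime := inferInstance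
  have hp3 : 3 ≤ p := (hpf.out.two_le).lt_of_ne (Ne.symm hp)
  have hp10 : p - 1 ≠ 0 := by omega
  haveI : NeZero (p - 1) := ⟨hp10⟩
  set ω : ℂ := Complex.exp (2 * Real.pi * I / (p - 1 : ℕ)) with hωdef
  set ζ : ℂ := Complex.exp (2 * Real.pi * I / p) with hζdef
  have hω : IsPrimitiveRoot ω (p - 1) := Complex.isPrimitiveRoot_exp _ hp10
  set K : IntermediateField ℚ ℂ := ℚ⟮ω⟯ with hK
  -- exponential rewrite
  have hexp : ∀ a : (ZMod p)ˣ,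
      Complex.exp (2 * Real.pi * Complex.I * (((a : ZMod p).val : ℕ) : ℂ) / p)
        = ζ ^ ((a : ZMod p).val) := by
    intro a
    rw [hζdef, ← Complex.exp_nat_mul]
    congr 1
    ring
  -- χ values in K
  have hχK : ∀ a : (ZMod p)ˣ, ((χ a : ℂˣ) : ℂ) ∈ K := by
    intro a
    have hpow : ((χ a : ℂˣ) : ℂ) ^ (p - 1) = 1 := by
      have h1 : χ a ^ (p - 1) = 1 := by
        rw [← map_pow, ZMod.units_pow_card_sub_one_eq_one, map_one]
      calc ((χ a : ℂˣ) : ℂ) ^ (p - 1) = ((χ a ^ (p - 1) : ℂˣ) : ℂ) := by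
            rw [Units.val_pow_eq_pow_val]
        _ = 1 := by rw [h1]; rfl
    obtain ⟨i, _, hi⟩ := hω.eq_pow_of_pow_eq_one hpow
    rw [← hi]
    exact pow_mem (IntermediateField.mem_adjoin_simple_self ℚ ω) i
  have hηK : ∀ a : (ZMod p)ˣ, ((η a : ℂˣ) : ℂ) ∈ K := by
    intro a
    rw [hη a]
    split_ifs
    · exact one_mem K
    · exact neg_mem (one_mem K)
  -- existence of a nonsquare
  obtain ⟨g, hg⟩ := IsCyclic.exists_generator (α := (ZMod p)ˣ)
  have hog : orderOf g = p - 1 := by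
    rw [orderOf_eq_card_of_forall_mem_zpowers hg, Nat.card_eq_fintype_card, ZMod.card_units]
  have hgns : ¬∃ b : (ZMod p)ˣ, b ^ 2 = g := by
    rintro ⟨b, hb⟩
    have hodd : p % 2 = 1 := Nat.odd_iff.mp (hpf.out.odd_of_ne_two hp)
    have h2 : 2 * ((p - 1) / 2) = p - 1 := by omega
    have hpow1 : g ^ ((p - 1) / 2) = 1 := by
      rw [← hb, ← pow_mul, h2, ZMod.units_pow_card_sub_one_eq_one]
    have hdvd : orderOf g ∣ (p - 1) / 2 := orderOf_dvd_of_pow_eq_one hpow1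
    rw [hog] at hdvd
    have := Nat.le_of_dvd (by omega) hdvd
    omega
  have hη1 : ((η 1 : ℂˣ) : ℂ) = 1 := by
    rw [hη 1, if_pos ⟨1, one_pow 2⟩]
  have hηg : ((η g : ℂˣ) : ℂ) = -1 := by
    rw [hη g, if_neg hgns]
  constructor
  · -- G(χ) ≠ G(χη)
    intro h
    set c : (ZMod p)ˣ → ℂ := fun a => (χ a : ℂ) * (1 - (η a : ℂ)) with hc
    have hcmem : ∀ a, c a ∈ K := fun a =>
      mul_mem (hχK a) (sub_mem (one_mem K) (hηK a))
    have hsum : ∑ a : (ZMod p)ˣ, c a * ζ ^ ((a : ZMod p).val) = 0 := by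
      have : ∑ a : (ZMod p)ˣ, c a * ζ ^ ((a : ZMod p).val)
          = gaussSumP p χ - gaussSumP p (χ * η) := by
        rw [gaussSumP, gaussSumP, ← Finset.sum_sub_distrib]
        apply Finset.sum_congr rfl
        intro a _
        rw [hexp a, hc]
        simp only [MonoidHom.mul_apply, Units.val_mul]
        ring
      rw [this, h, sub_self]
    have := key_zero p hp c hcmem hsum g
    rw [hc] at this
    simp only [hηg] at this
    have h2 : (1 : ℂ) - (-1) = 2 := by norm_num
    rw [h2] at this
    rcases mul_eq_zero.mp this with h' | h'
    · exact (χ g).ne_zero h'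
    · norm_num at h'
  · -- G(χ) ≠ -G(χη)
    intro h
    set c : (ZMod p)ˣ → ℂ := fun a => (χ a : ℂ) * (1 + (η a : ℂ)) with hc
    have hcmem : ∀ a, c a ∈ K := fun a =>
      mul_mem (hχK a) (add_mem (one_mem K) (hηK a))
    have hsum : ∑ a : (ZMod p)ˣ, c a * ζ ^ ((a : ZMod p).val) = 0 := by
      have : ∑ a : (ZMod p)ˣ, c a * ζ ^ ((a : ZMod p).val)
          = gaussSumP p χ + gaussSumP p (χ * η) := by
        rw [gaussSumP, gaussSumP, ← Finset.sum_add_distrib]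
        apply Finset.sum_congr rfl
        intro a _
        rw [hexp a, hc]
        simp only [MonoidHom.mul_apply, Units.val_mul]
        ring
      rw [this, h, neg_add_cancel]
    have := key_zero p hp c hcmem hsum 1
    rw [hc] at this
    simp only [hη1] at this
    have h2 : (1 : ℂ) + 1 = 2 := by norm_num
    rw [h2] at this
    rcases mul_eq_zero.mp this with h' | h'
    · exact (χ 1).ne_zero h'
    · norm_num at h'
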